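/- arXiv:2108.09008 — 3 statements merged into one kernel-verified Lean document; each statement's English description precedes it below -/
import Mathlib

section
/- Let (Ω,F,P) be a probability space with a discrete filtration (F_j)_{j=0,...,m}, and let G = (G_j)_{j=0,...,m} be an adapted integrable process. Define the Snell envelope by backward induction: S_m = G_m and S_j = max(G_j, E[S_{j+1} | F_j]) for j < m. Then S is a supermartingale dominating G, and the stopping time τ* := min{j : S_j = G_j} is optimal: E[G_{τ*}] = E[S_0] = sup_{τ} E[G_τ], where the supremum is over all {0,...,m}-valued stopping times τ. -/
open MeasureTheory

-- auxiliary: a function defined by composing along a bounded ℕ-valued map is a finite sum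
lemma comp_eq_sum_aux {Ω : Type*} (σ : Ω → ℕ) (N : ℕ) (hb : ∀ ω, σ ω ≤ N) (f : ℕ → Ω → ℝ) :
    (fun ω => f (σ ω) ω) =
      fun ω => ∑ j ∈ Finset.range (N + 1), Set.indicator {ω | σ ω = j} (f j) ω := by
  funext ω
  rw [Finset.sum_eq_single (σ ω)]
  · simp [Set.indicator_of_mem, Set.mem_setOf_eq]
  · intro j _ hj
    exact Set.indicator_of_notMem (by simpa using fun h => hj h.symm) _
  · intro h
    exact absurd (Finset.mem_range.2 (Nat.lt_succ_of_le (hb ω))) h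

lemma integrable_comp_aux {Ω : Type*} [m0 : MeasurableSpace Ω] (μ : Measure Ω)
    (σ : Ω → ℕ) (N : ℕ) (hb : ∀ ω, σ ω ≤ N)
    (hmeas : ∀ j, MeasurableSet {ω | σ ω = j}) (f : ℕ → Ω → ℝ)
    (hf : ∀ j, Integrable (f j) μ) :
    Integrable (fun ω => f (σ ω) ω) μ := by
  rw [comp_eq_sum_aux σ N hb f]
  exact integrable_finset_sum _ (fun j _ => (hf j).indicator (hmeas j))

theorem stmt_6 {Ω : Type*} [m0 : MeasurableSpace Ω] (μ : Measure Ω) [IsProbabilityMeasure μ]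
    (m : ℕ) (ℱ : ℕ → MeasurableSpace Ω) (hmono : Monotone ℱ) (hle : ∀ j, ℱ j ≤ m0)
    (G S : ℕ → Ω → ℝ)
    (hGmeas : ∀ j, StronglyMeasurable[ℱ j] (G j))
    (hGint : ∀ j, Integrable (G j) μ)
    (hSint : ∀ j, Integrable (S j) μ)
    (hSm : S m = G m)
    (hSrec : ∀ j, j < m → S j = fun ω => max (G j ω) ((μ[S (j + 1)|ℱ j]) ω))
    (τ : Ω → ℕ) (hτ : ∀ ω, τ ω = sInf {j | S j ω = G j ω}) :
    (∀ j, j ≤ m → ∀ ω, G j ω ≤ S j ω) ∧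
    (∀ j, j < m → μ[S (j + 1)|ℱ j] ≤ᵐ[μ] S j) ∧
    (∀ ω, τ ω ≤ m) ∧
    (∫ ω, G (τ ω) ω ∂μ = ∫ ω, S 0 ω ∂μ) ∧
    (∀ σ : Ω → ℕ, (∀ ω, σ ω ≤ m) → (∀ j, MeasurableSet[ℱ j] {ω | σ ω = j}) →
      ∫ ω, G (σ ω) ω ∂μ ≤ ∫ ω, S 0 ω ∂μ) := by
  -- basic pointwise facts
  have hGS : ∀ j, j ≤ m → ∀ ω, G j ω ≤ S j ω := by
    intro j hj ω
    rcases lt_or_eq_of_le hj with h | h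
    · rw [hSrec j h]; exact le_max_left _ _
    · subst h; rw [hSm]
  have hcond_le : ∀ j, j < m → ∀ ω, (μ[S (j + 1)|ℱ j]) ω ≤ S j ω := by
    intro j hj ω; rw [hSrec j hj]; exact le_max_right _ _
  -- S j is ℱ j strongly measurable for j ≤ m
  have hSmeas : ∀ j, j ≤ m → StronglyMeasurable[ℱ j] (S j) := by
    intro j hj
    rcases lt_or_eq_of_le hj with h | h
    · rw [hSrec j h]
      exact ((hGmeas j).measurable.max stronglyMeasurable_condExp.measurable).stronglyMeasurable
    · subst h; rw [hSm]; exact hGmeas j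
  -- τ facts
  have hmem : ∀ ω, m ∈ {j | S j ω = G j ω} := fun ω => by
    simp only [Set.mem_setOf_eq, hSm]
  have hτ_le : ∀ ω, τ ω ≤ m := fun ω => by
    rw [hτ]; exact Nat.sInf_le (hmem ω)
  have hτ_spec : ∀ ω, S (τ ω) ω = G (τ ω) ω := fun ω => by
    rw [hτ]; exact Nat.sInf_mem ⟨m, hmem ω⟩
  have hτ_gt : ∀ ω n, n < τ ω → S n ω ≠ G n ω := by
    intro ω n hn
    rw [hτ] at hn
    exact Nat.notMem_of_lt_sInf hn
  -- τ is a stopping time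
  have hτ_meas : ∀ j, MeasurableSet[ℱ j] {ω | τ ω = j} := by
    intro j
    by_cases hj : j ≤ m
    · have hA : ∀ i, i ≤ m → MeasurableSet[ℱ i] {ω | S i ω = G i ω} := fun i hi =>
        (hSmeas i hi).measurableSet_eq_fun (hGmeas i)
      have : {ω | τ ω = j} =
          {ω | S j ω = G j ω} ∩ ⋂ i ∈ Finset.range j, {ω | S i ω = G i ω}ᶜ := by
        ext ω
        simp only [Set.mem_setOf_eq, Set.mem_inter_iff, Set.mem_iInter, Set.mem_compl_iff,
          Finset.mem_range]
        constructor
        · intro h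
          refine ⟨by rw [← h]; exact hτ_spec ω, fun i hi => hτ_gt ω i (h ▸ hi)⟩
        · rintro ⟨h1, h2⟩
          have h3 : τ ω ≤ j := by rw [hτ]; exact Nat.sInf_le h1
          rcases lt_or_eq_of_le h3 with h4 | h4
          · exact absurd (hτ_spec ω) (h2 _ h4)
          · exact h4
      rw [this]
      exact ((hA j hj).inter (MeasurableSet.biInter (Set.to_countable _)
        (fun i hi => hmono (le_of_lt (Finset.mem_range.1 hi))
          _ ((hA i (le_trans (le_of_lt (Finset.mem_range.1 hi)) hj)).compl))))
    · have : {ω | τ ω = j} = ∅ := by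
        ext ω; simp only [Set.mem_setOf_eq, Set.mem_empty_iff_false, iff_false]
        intro h; exact hj (h ▸ hτ_le ω)
      rw [this]; exact @MeasurableSet.empty Ω (ℱ j)
  -- integrability of stopped processes
  have hstop_meas : ∀ (σ : Ω → ℕ), (∀ j, MeasurableSet[ℱ j] {ω | σ ω = j}) →
      Measurable σ := by
    intro σ hσ
    refine measurable_to_countable' (fun j => ?_)
    have : σ ⁻¹' {j} = {ω | σ ω = j} := by ext ω; simp
    rw [this]; exact hle j _ (hσ j)
  have hstop_int : ∀ (σ : Ω → ℕ), Measurable σ → ∀ n,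
      Integrable (fun ω => S (min (σ ω) n) ω) μ := by
    intro σ hσ n
    refine integrable_comp_aux μ (fun ω => min (σ ω) n) n (fun ω => min_le_right _ _)
      (fun j => ?_) S hSint
    have : {ω | min (σ ω) n = j} = (fun ω => min (σ ω) n) ⁻¹' {j} := by ext ω; simp
    rw [this]
    exact (hσ.min measurable_const) (measurableSet_singleton j)
  -- {n < σ} is ℱ n measurable
  have hgt_meas : ∀ (σ : Ω → ℕ), (∀ j, MeasurableSet[ℱ j] {ω | σ ω = j}) →
      ∀ n, MeasurableSet[ℱ n] {ω | n < σ ω} := by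
    intro σ hσ n
    have : {ω | n < σ ω} = (⋃ j ∈ Finset.range (n + 1), {ω | σ ω = j})ᶜ := by
      ext ω
      simp only [Set.mem_setOf_eq, Set.mem_compl_iff, Set.mem_iUnion, Finset.mem_range,
        not_exists, Nat.lt_succ_iff]
      constructor
      · intro h j hj hje; omega
      · intro h; by_contra hc; exact h (σ ω) (not_lt.1 hc) rfl
    rw [this]
    exact (MeasurableSet.biUnion (Set.to_countable _)
      (fun j hj => hmono (Nat.lt_succ_iff.1 (Finset.mem_range.1 hj)) _ (hσ j))).compl
  -- one-step supermartingale computation for stopped process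
  have step : ∀ (σ : Ω → ℕ), Measurable σ → (∀ j, MeasurableSet[ℱ j] {ω | σ ω = j}) →
      ∀ n, n < m →
      ∫ ω, S (min (σ ω) (n + 1)) ω ∂μ ≤ ∫ ω, S (min (σ ω) n) ω ∂μ ∧
      ((∀ ω, n < σ ω → S n ω = (μ[S (n + 1)|ℱ n]) ω) →
        ∫ ω, S (min (σ ω) (n + 1)) ω ∂μ = ∫ ω, S (min (σ ω) n) ω ∂μ) := by
    intro σ hσm hσ n hn
    set A : Set Ω := {ω | n < σ ω} with hA_def
    have hAn : MeasurableSet[ℱ n] A := hgt_meas σ hσ n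
    have hA : MeasurableSet A := hle n _ hAn
    have hint1 := hstop_int σ hσm (n + 1)
    have hint0 := hstop_int σ hσm n
    -- split both integrals over A and Aᶜ
    have hsplit1 : ∫ ω, S (min (σ ω) (n + 1)) ω ∂μ =
        (∫ ω in A, S (min (σ ω) (n + 1)) ω ∂μ) + ∫ ω in Aᶜ, S (min (σ ω) (n + 1)) ω ∂μ :=
      (integral_add_compl hA hint1).symm
    have hsplit0 : ∫ ω, S (min (σ ω) n) ω ∂μ =
        (∫ ω in A, S (min (σ ω) n) ω ∂μ) + ∫ ω in Aᶜ, S (min (σ ω) n) ω ∂μ :=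
      (integral_add_compl hA hint0).symm
    have hcAc : ∫ ω in Aᶜ, S (min (σ ω) (n + 1)) ω ∂μ =
        ∫ ω in Aᶜ, S (min (σ ω) n) ω ∂μ := by
      refine setIntegral_congr_fun hA.compl (fun ω hω => ?_)
      have : σ ω ≤ n := not_lt.1 hω
      rw [min_eq_left this, min_eq_left (this.trans (Nat.le_succ n))]
    have hcA1 : ∫ ω in A, S (min (σ ω) (n + 1)) ω ∂μ = ∫ ω in A, S (n + 1) ω ∂μ := by
      refine setIntegral_congr_fun hA (fun ω hω => ?_)
      rw [min_eq_right (Nat.succ_le_of_lt hω)]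
    have hcA0 : ∫ ω in A, S (min (σ ω) n) ω ∂μ = ∫ ω in A, S n ω ∂μ := by
      refine setIntegral_congr_fun hA (fun ω hω => ?_)
      rw [min_eq_right (le_of_lt hω)]
    have hce : ∫ ω in A, S (n + 1) ω ∂μ = ∫ ω in A, (μ[S (n + 1)|ℱ n]) ω ∂μ :=
      (setIntegral_condExp (hle n) (hSint (n + 1)) hAn).symm
    constructor
    · have hineq : ∫ ω in A, (μ[S (n + 1)|ℱ n]) ω ∂μ ≤ ∫ ω in A, S n ω ∂μ :=
        setIntegral_mono integrable_condExp.integrableOn (hSint n).integrableOn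
          (fun ω => hcond_le n hn ω)
      rw [hsplit1, hsplit0, hcAc, hcA1, hcA0, hce]
      exact add_le_add_left hineq _
    · intro heq
      have : ∫ ω in A, (μ[S (n + 1)|ℱ n]) ω ∂μ = ∫ ω in A, S n ω ∂μ :=
        (setIntegral_congr_fun hA (fun ω hω => (heq ω hω).symm))
      rw [hsplit1, hsplit0, hcAc, hcA1, hcA0, hce, this]
  -- iterated: for any stopping time, ∫ S(min σ n) ≤ ∫ S 0
  have chain : ∀ (σ : Ω → ℕ), Measurable σ → (∀ j, MeasurableSet[ℱ j] {ω | σ ω = j}) →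
      ∀ n, n ≤ m → ∫ ω, S (min (σ ω) n) ω ∂μ ≤ ∫ ω, S 0 ω ∂μ := by
    intro σ hσm hσ n
    induction n with
    | zero => intro _; simp
    | succ k ih =>
      intro hk
      have hkm : k < m := lt_of_lt_of_le (Nat.lt_succ_self k) hk
      exact le_trans ((step σ hσm hσ k hkm).1) (ih (le_of_lt hkm))
  have chain_eq : ∀ n, n ≤ m → ∫ ω, S (min (τ ω) n) ω ∂μ = ∫ ω, S 0 ω ∂μ := by
    have hτm : Measurable τ := hstop_meas τ hτ_meas
    intro n
    induction n with
    | zero => intro _; simp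
    | succ k ih =>
      intro hk
      have hkm : k < m := lt_of_lt_of_le (Nat.lt_succ_self k) hk
      have heq : ∀ ω, k < τ ω → S k ω = (μ[S (k + 1)|ℱ k]) ω := by
        intro ω hω
        have h1 := hSrec k hkm
        have h2 : S k ω ≠ G k ω := hτ_gt ω k hω
        have h3 : S k ω = max (G k ω) ((μ[S (k + 1)|ℱ k]) ω) := by rw [h1]
        rcases max_choice (G k ω) ((μ[S (k + 1)|ℱ k]) ω) with h | h
        · exact absurd (h3.trans h) h2
        · exact h3.trans h
      rw [(step τ hτm hτ_meas k hkm).2 heq, ih (le_of_lt hkm)]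
  -- assemble
  refine ⟨hGS, fun j hj => Filter.Eventually.of_forall (hcond_le j hj), hτ_le, ?_, ?_⟩
  · -- optimality of τ
    have hτm : Measurable τ := hstop_meas τ hτ_meas
    have h1 : (fun ω => G (τ ω) ω) = fun ω => S (min (τ ω) m) ω := by
      funext ω
      rw [min_eq_left (hτ_le ω), hτ_spec ω]
    calc ∫ ω, G (τ ω) ω ∂μ = ∫ ω, S (min (τ ω) m) ω ∂μ := by rw [h1]
      _ = ∫ ω, S 0 ω ∂μ := chain_eq m le_rfl
  · intro σ hσb hσ
    have hσm : Measurable σ := hstop_meas σ hσ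
    have h1 : ∫ ω, G (σ ω) ω ∂μ ≤ ∫ ω, S (σ ω) ω ∂μ := by
      refine integral_mono ?_ ?_ (fun ω => hGS (σ ω) (hσb ω) ω)
      · exact integrable_comp_aux μ σ m hσb
          (fun j => hle j _ (hσ j)) G hGint
      · exact integrable_comp_aux μ σ m hσb
          (fun j => hle j _ (hσ j)) S hSint
    have h2 : (fun ω => S (σ ω) ω) = fun ω => S (min (σ ω) m) ω := by
      funext ω; rw [min_eq_left (hσb ω)]
    calc ∫ ω, G (σ ω) ω ∂μ ≤ ∫ ω, S (σ ω) ω ∂μ := h1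
      _ = ∫ ω, S (min (σ ω) m) ω ∂μ := by rw [h2]
      _ ≤ ∫ ω, S 0 ω ∂μ := chain σ hσm hσ m le_rfl
end

section
/- In the discrete-time Snell envelope setting, for τ* = min{j : S_j = G_j}, the stopped process (S_{j ∧ τ*})_{j=0,...,m} is a martingale. -/
open MeasureTheory

theorem stmt_7 {Ω : Type*} [m0 : MeasurableSpace Ω] (μ : Measure Ω) [IsProbabilityMeasure μ]
    (m : ℕ) (ℱ : ℕ → MeasurableSpace Ω) (hmono : Monotone ℱ) (hle : ∀ j, ℱ j ≤ m0)
    (G S : ℕ → Ω → ℝ)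
    (hGmeas : ∀ j, StronglyMeasurable[ℱ j] (G j))
    (hGint : ∀ j, Integrable (G j) μ)
    (hSint : ∀ j, Integrable (S j) μ)
    (hSm : S m = G m)
    (hSrec : ∀ j, j < m → S j = fun ω => max (G j ω) ((μ[S (j + 1)|ℱ j]) ω))
    (τ : Ω → ℕ) (hτ : ∀ ω, τ ω = sInf {j | S j ω = G j ω}) :
    ∀ j, j < m →
      (μ[(fun ω => S (min (j + 1) (τ ω)) ω)|ℱ j]) =ᵐ[μ] fun ω => S (min j (τ ω)) ω := by
  -- measurability of S i w.r.t. ℱ i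
  have hSmeas : ∀ i, i ≤ m → StronglyMeasurable[ℱ i] (S i) := by
    have key : ∀ d i, m - i = d → i ≤ m → StronglyMeasurable[ℱ i] (S i) := by
      intro d
      induction d with
      | zero =>
        intro i h hi
        have : i = m := by omega
        subst this
        rw [hSm]; exact hGmeas i
      | succ d ih =>
        intro i h hi
        have hlt : i < m := by omega
        rw [hSrec i hlt]
        exact @StronglyMeasurable.sup Ω ℝ (G i) (μ[S (i + 1)|ℱ i]) (ℱ i) _ _ _ (hGmeas i) stronglyMeasurable_condExp
    intro i hi; exact key (m - i) i rfl hi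
  intro j hj
  have hne : ∀ ω, ({k | S k ω = G k ω} : Set ℕ).Nonempty := fun ω =>
    ⟨m, by simp [Set.mem_setOf_eq, hSm]⟩
  have hτmem : ∀ ω, S (τ ω) ω = G (τ ω) ω := by
    intro ω
    have := Nat.sInf_mem (hne ω)
    rw [← hτ ω] at this
    exact this
  have hτmin : ∀ ω l, l < τ ω → S l ω ≠ G l ω := by
    intro ω l hl hcontra
    have h1 : l ∈ {k | S k ω = G k ω} := hcontra
    have := Nat.sInf_le h1
    rw [← hτ ω] at this; omega
  -- measurability of {τ = i} for i ≤ j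
  have hEq : ∀ l, l ≤ j → MeasurableSet[ℱ j] {ω | S l ω = G l ω} := by
    intro l hl
    have hlm : l ≤ m := by omega
    exact measurableSet_eq_fun
      (((hSmeas l hlm).mono (hmono hl)).measurable)
      (((hGmeas l).mono (hmono hl)).measurable)
  have hB : ∀ i, i ≤ j → MeasurableSet[ℱ j] {ω | τ ω = i} := by
    intro i hi
    have hset : {ω | τ ω = i} =
        {ω | S i ω = G i ω} ∩ ⋂ l, ⋂ (_ : l < i), {ω | S l ω = G l ω}ᶜ := by
      ext ω
      simp only [Set.mem_setOf_eq, Set.mem_inter_iff, Set.mem_iInter, Set.mem_compl_iff]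
      constructor
      · rintro rfl
        exact ⟨hτmem ω, fun l hl => hτmin ω l hl⟩
      · rintro ⟨h1, h2⟩
        have h4 : τ ω ≤ i := by
          rw [hτ ω]; exact Nat.sInf_le h1
        rcases lt_or_eq_of_le h4 with h | h
        · exact absurd (hτmem ω) (h2 _ h)
        · exact h
    rw [hset]
    exact (hEq i hi).inter
      (MeasurableSet.iInter fun l => MeasurableSet.iInter fun hl => (hEq l (by omega)).compl)
  set A : Set Ω := {ω | j < τ ω} with hAdef
  have hUmeas : ∀ n, n ≤ j + 1 → MeasurableSet[ℱ j] {ω | n ≤ τ ω} := by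
    intro n hn
    have : {ω | n ≤ τ ω} = (⋃ i, ⋃ (_ : i < n), {ω | τ ω = i})ᶜ := by
      ext ω
      simp only [Set.mem_setOf_eq, Set.mem_compl_iff, Set.mem_iUnion]
      constructor
      · rintro h ⟨i, hi, rfl⟩; omega
      · intro h
        by_contra hc
        exact h ⟨τ ω, by omega, rfl⟩
    rw [this]
    exact (MeasurableSet.iUnion fun i => MeasurableSet.iUnion fun hi => hB i (by omega)).compl
  have hA : MeasurableSet[ℱ j] A := hUmeas (j + 1) le_rfl
  set B : Set Ω := {ω | j ≤ τ ω} with hBdef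
  have hBmeas : MeasurableSet[ℱ j] B := hUmeas j (by omega)
  set Y : Ω → ℝ := fun ω =>
    (∑ i ∈ Finset.range j, Set.indicator {ω' | τ ω' = i} (S i) ω)
      + Set.indicator B (S j) ω with hYdef
  set f : Ω → ℝ := fun ω => S (j + 1) ω - S j ω with hfdef
  -- pointwise identities
  have hzero : ∀ ω, τ ω ≥ j → ∑ i ∈ Finset.range j, Set.indicator {ω' | τ ω' = i} (S i) ω = 0 := by
    intro ω h
    refine Finset.sum_eq_zero fun i hi => Set.indicator_of_notMem ?_ _
    have := Finset.mem_range.mp hi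
    intro hm
    have : τ ω = i := hm
    omega
  have hYeq : (fun ω => S (min j (τ ω)) ω) = Y := by
    funext ω
    simp only [hYdef]
    by_cases h : τ ω < j
    · have hmin : min j (τ ω) = τ ω := by omega
      have hs : ∑ i ∈ Finset.range j, Set.indicator {ω' | τ ω' = i} (S i) ω
          = Set.indicator {ω' | τ ω' = τ ω} (S (τ ω)) ω := by
        refine Finset.sum_eq_single_of_mem (τ ω) (Finset.mem_range.mpr h) ?_
        intro i _ hne
        refine Set.indicator_of_notMem ?_ _
        intro hm
        exact hne (Eq.symm hm)
      rw [hmin, hs, Set.indicator_of_mem (show ω ∈ {ω' | τ ω' = τ ω} from rfl),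
        Set.indicator_of_notMem (by simp only [hBdef, Set.mem_setOf_eq]; omega), add_zero]
    · have hmin : min j (τ ω) = j := by omega
      rw [hmin, hzero ω (by omega), zero_add,
        Set.indicator_of_mem (by simp only [hBdef, Set.mem_setOf_eq]; omega)]
  have hXeq : (fun ω => S (min (j + 1) (τ ω)) ω) = fun ω => Y ω + Set.indicator A f ω := by
    funext ω
    rw [← congrFun hYeq ω]
    by_cases h : τ ω ≤ j
    · have h1 : min (j + 1) (τ ω) = τ ω := by omega
      have h2 : min j (τ ω) = τ ω := by omega
      rw [h1, h2, Set.indicator_of_notMem (by simp [hAdef]; omega), add_zero]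
    · have h1 : min (j + 1) (τ ω) = j + 1 := by omega
      have h2 : min j (τ ω) = j := by omega
      rw [h1, h2, Set.indicator_of_mem (by simp [hAdef]; omega)]
      simp [hfdef]
  -- integrability and measurability of Y
  have hYint : Integrable Y μ := by
    apply Integrable.add
    · apply integrable_finset_sum
      intro i hi
      exact (hSint i).indicator (hle j _ (hB i (by
        have := Finset.mem_range.mp hi; omega)))
    · exact (hSint j).indicator (hle j _ hBmeas)
  have hYsm : StronglyMeasurable[ℱ j] Y := by
    apply StronglyMeasurable.add
    · apply Finset.stronglyMeasurable_fun_sum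
      intro i hi
      exact StronglyMeasurable.indicator
        ((hSmeas i (by have := Finset.mem_range.mp hi; omega)).mono
          (hmono (by have := Finset.mem_range.mp hi; omega)))
        (hB i (by have := Finset.mem_range.mp hi; omega))
    · exact StronglyMeasurable.indicator ((hSmeas j (by omega)).mono le_rfl) hBmeas
  have hfint : Integrable f μ := (hSint (j + 1)).sub (hSint j)
  have hAfint : Integrable (Set.indicator A f) μ := hfint.indicator (hle j _ hA)
  -- conditional expectation computations
  have h1 : μ[fun ω => Y ω + Set.indicator A f ω|ℱ j]
      =ᵐ[μ] μ[Y|ℱ j] + μ[Set.indicator A f|ℱ j] := condExp_add hYint hAfint (ℱ j)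
  have h2 : μ[Y|ℱ j] = Y :=
    condExp_of_stronglyMeasurable (hle j) hYsm hYint
  have h3 : μ[Set.indicator A f|ℱ j] =ᵐ[μ] Set.indicator A (μ[f|ℱ j]) :=
    condExp_indicator hfint hA
  have hSjce : μ[S j|ℱ j] = S j :=
    condExp_of_stronglyMeasurable (hle j) (hSmeas j (by omega)) (hSint j)
  have h4 : μ[f|ℱ j] =ᵐ[μ] fun ω => (μ[S (j + 1)|ℱ j]) ω - S j ω := by
    have := condExp_sub (hSint (j + 1)) (hSint j) (m := ℱ j)
    refine this.trans ?_
    rw [hSjce]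
    rfl
  -- on A, (μ[S (j+1)|ℱ j]) ω = S j ω
  have hkey : ∀ ω ∈ A, (μ[S (j + 1)|ℱ j]) ω = S j ω := by
    intro ω hω
    have hne' : S j ω ≠ G j ω := hτmin ω j hω
    have hrec := congrFun (hSrec j hj) ω
    rcases max_choice (G j ω) ((μ[S (j + 1)|ℱ j]) ω) with h | h
    · rw [h] at hrec; exact absurd hrec hne'
    · rw [h] at hrec; exact hrec.symm
  -- combine
  rw [hXeq]
  refine h1.trans ?_
  rw [h2]
  have h5 : Set.indicator A (μ[f|ℱ j]) =ᵐ[μ] (0 : Ω → ℝ) := by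
    filter_upwards [h4] with ω e4
    by_cases hω : ω ∈ A
    · rw [Set.indicator_of_mem hω, e4]
      simp [hkey ω hω]
    · rw [Set.indicator_of_notMem hω]; rfl
  calc Y + μ[Set.indicator A f|ℱ j]
      =ᵐ[μ] Y + Set.indicator A (μ[f|ℱ j]) := by
        filter_upwards [h3] with ω e3
        simp only [Pi.add_apply, e3]
    _ =ᵐ[μ] Y + 0 := by
        filter_upwards [h5] with ω e5
        simp only [Pi.add_apply, e5]
    _ = Y := by simp
    _ = fun ω => S (min j (τ ω)) ω := hYeq.symm
end

section
/- Let (Ω,F,P) with filtration (F_j)_{j=0}^m, let (G¹_j) and (G²_j) be adapted integrable processes, and define the multiple stopping value V := sup{ E[G¹_{τ₁} + G²_{τ₂}] : τ₁ ≤ τ₂ stopping times with values in {0,...,m} }. Define J_j := G¹_j + ess sup over stopping times τ₂ ≥ j of E[G²_{τ₂} | F_j] (i.e., J_j = G¹_j + S²_j where S² is the Snell envelope of G² started at j). Then V = sup over stopping times τ₁ of E[J_{τ₁}], and an optimal pair (τ₁*, τ₂*) exists: τ₁* optimal for stopping J, and τ₂* := min{k ≥ τ₁* : S²_k = G²_k}.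 -/
open MeasureTheory
set_option linter.unusedSectionVars false
set_option maxHeartbeats 1000000

section St18Aux

variable {Ω : Type*} [m0 : MeasurableSpace Ω] {μ : Measure Ω} [IsProbabilityMeasure μ]
  {m : ℕ} {ℱ : ℕ → MeasurableSpace Ω}

lemma st18_tele (f : ℕ → ℝ) (a : ℕ) : ∀ b, a ≤ b →
    f a - f b = ∑ j ∈ Finset.Ico a b, (f j - f (j + 1)) := by
  intro b hb
  induction b, hb using Nat.le_induction with
  | base => simp
  | succ b hb ih =>
      rw [Finset.sum_Ico_succ_top hb, ← ih]
      ring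

lemma st18_le_set (hmono : Monotone ℱ) {τ : Ω → ℕ}
    (hτ : ∀ j, MeasurableSet[ℱ j] {ω | τ ω = j}) (j : ℕ) :
    MeasurableSet[ℱ j] {ω | τ ω ≤ j} := by
  have : {ω | τ ω ≤ j} = ⋃ i, ⋃ (_ : i ≤ j), {ω | τ ω = i} := by
    ext ω; simp [Set.mem_iUnion]
  rw [this]
  exact MeasurableSet.iUnion fun i => MeasurableSet.iUnion fun hij => hmono hij _ (hτ i)

lemma st18_key (hmono : Monotone ℱ) (hle : ∀ j, ℱ j ≤ m0) {σ τ : Ω → ℕ}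
    (hστ : ∀ ω, σ ω ≤ τ ω) (hτm : ∀ ω, τ ω ≤ m)
    (hσ : ∀ j, MeasurableSet[ℱ j] {ω | σ ω = j})
    (hτ : ∀ j, MeasurableSet[ℱ j] {ω | τ ω = j})
    {X : ℕ → Ω → ℝ} (hXint : ∀ j, Integrable (X j) μ)
    (hσint : Integrable (fun ω => X (σ ω) ω) μ) (hτint : Integrable (fun ω => X (τ ω) ω) μ) :
    ∫ ω, X (σ ω) ω ∂μ - ∫ ω, X (τ ω) ω ∂μ
      = ∑ j ∈ Finset.range m,
          ∫ ω in {ω' | σ ω' ≤ j ∧ j < τ ω'}, (X j ω - (μ[X (j + 1)|ℱ j]) ω) ∂μ := by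
  set A : ℕ → Set Ω := fun j => {ω' | σ ω' ≤ j ∧ j < τ ω'} with hAdef
  have hAf : ∀ j, MeasurableSet[ℱ j] (A j) := by
    intro j
    have : A j = {ω | σ ω ≤ j} ∩ {ω | τ ω ≤ j}ᶜ := by
      ext ω; simp only [hAdef, Set.mem_setOf_eq, Set.mem_inter_iff, Set.mem_compl_iff]
      omega
    rw [this]
    exact (st18_le_set hmono hσ j).inter (st18_le_set hmono hτ j).compl
  have hA : ∀ j, MeasurableSet (A j) := fun j => hle j _ (hAf j)
  have hpt : ∀ ω, X (σ ω) ω - X (τ ω) ω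
      = ∑ j ∈ Finset.range m, (A j).indicator (fun ω' => X j ω' - X (j + 1) ω') ω := by
    intro ω
    rw [st18_tele (fun j => X j ω) _ _ (hστ ω)]
    have hfil : Finset.Ico (σ ω) (τ ω)
        = (Finset.range m).filter (fun j => σ ω ≤ j ∧ j < τ ω) := by
      ext j
      simp only [Finset.mem_Ico, Finset.mem_filter, Finset.mem_range]
      have := hτm ω
      omega
    rw [hfil, Finset.sum_filter]
    refine Finset.sum_congr rfl fun j _ => ?_
    by_cases h : σ ω ≤ j ∧ j < τ ω
    · rw [if_pos h, Set.indicator_of_mem (show ω ∈ A j from h)]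
    · rw [if_neg h, Set.indicator_of_notMem (show ω ∉ A j from h)]
  have h1 : ∫ ω, X (σ ω) ω ∂μ - ∫ ω, X (τ ω) ω ∂μ
      = ∫ ω, (X (σ ω) ω - X (τ ω) ω) ∂μ := (integral_sub hσint hτint).symm
  rw [h1]
  have h2 : ∫ ω, (X (σ ω) ω - X (τ ω) ω) ∂μ
      = ∑ j ∈ Finset.range m, ∫ ω, (A j).indicator (fun ω' => X j ω' - X (j + 1) ω') ω ∂μ := by
    rw [← integral_finset_sum]
    · exact integral_congr_ae (Filter.Eventually.of_forall fun ω => hpt ω)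
    · exact fun j _ => ((hXint j).sub (hXint (j + 1))).indicator (hA j)
  rw [h2]
  refine Finset.sum_congr rfl fun j hj => ?_
  rw [integral_indicator (hA j)]
  rw [integral_sub ((hXint j).integrableOn) ((hXint (j + 1)).integrableOn),
    ← setIntegral_condExp (hle j) (hXint (j + 1)) (hAf j),
    ← integral_sub ((hXint j).integrableOn) (integrable_condExp.integrableOn)]

lemma st18_super (hmono : Monotone ℱ) (hle : ∀ j, ℱ j ≤ m0) {σ τ : Ω → ℕ}
    (hστ : ∀ ω, σ ω ≤ τ ω) (hτm : ∀ ω, τ ω ≤ m)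
    (hσ : ∀ j, MeasurableSet[ℱ j] {ω | σ ω = j})
    (hτ : ∀ j, MeasurableSet[ℱ j] {ω | τ ω = j})
    {X : ℕ → Ω → ℝ} (hXint : ∀ j, Integrable (X j) μ)
    (hσint : Integrable (fun ω => X (σ ω) ω) μ) (hτint : Integrable (fun ω => X (τ ω) ω) μ)
    (hsup : ∀ j, j < m → ∀ ω, (μ[X (j + 1)|ℱ j]) ω ≤ X j ω) :
    ∫ ω, X (τ ω) ω ∂μ ≤ ∫ ω, X (σ ω) ω ∂μ := by
  have hkey := st18_key hmono hle hστ hτm hσ hτ hXint hσint hτint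
  have : (0:ℝ) ≤ ∫ ω, X (σ ω) ω ∂μ - ∫ ω, X (τ ω) ω ∂μ := by
    rw [hkey]
    refine Finset.sum_nonneg fun j hj => ?_
    refine setIntegral_nonneg ?_ fun ω _ => sub_nonneg.2 (hsup j (Finset.mem_range.1 hj) ω)
    · have : MeasurableSet[ℱ j] {ω' | σ ω' ≤ j ∧ j < τ ω'} := by
        have h : {ω' | σ ω' ≤ j ∧ j < τ ω'} = {ω | σ ω ≤ j} ∩ {ω | τ ω ≤ j}ᶜ := by
          ext ω; simp only [Set.mem_setOf_eq, Set.mem_inter_iff, Set.mem_compl_iff]; omega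
        rw [h]
        exact (st18_le_set hmono hσ j).inter (st18_le_set hmono hτ j).compl
      exact hle j _ this
  linarith

lemma st18_mart (hmono : Monotone ℱ) (hle : ∀ j, ℱ j ≤ m0) {σ τ : Ω → ℕ}
    (hστ : ∀ ω, σ ω ≤ τ ω) (hτm : ∀ ω, τ ω ≤ m)
    (hσ : ∀ j, MeasurableSet[ℱ j] {ω | σ ω = j})
    (hτ : ∀ j, MeasurableSet[ℱ j] {ω | τ ω = j})
    {X : ℕ → Ω → ℝ} (hXint : ∀ j, Integrable (X j) μ)
    (hσint : Integrable (fun ω => X (σ ω) ω) μ) (hτint : Integrable (fun ω => X (τ ω) ω) μ)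
    (hmart : ∀ j, j < m → ∀ ω, σ ω ≤ j → j < τ ω → X j ω = (μ[X (j + 1)|ℱ j]) ω) :
    ∫ ω, X (σ ω) ω ∂μ = ∫ ω, X (τ ω) ω ∂μ := by
  have hkey := st18_key hmono hle hστ hτm hσ hτ hXint hσint hτint
  have hz : ∑ j ∈ Finset.range m,
      (∫ ω in {ω' | σ ω' ≤ j ∧ j < τ ω'}, (X j ω - (μ[X (j + 1)|ℱ j]) ω) ∂μ) = 0 := by
    refine Finset.sum_eq_zero fun j hj => ?_
    refine setIntegral_eq_zero_of_forall_eq_zero fun ω hω => ?_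
    rw [hmart j (Finset.mem_range.1 hj) ω hω.1 hω.2]
    ring
  rw [hz] at hkey
  linarith

/-- telescoping -/
lemma st18_stopped_eq_sum {τ : Ω → ℕ} (hτm : ∀ ω, τ ω ≤ m) (X : ℕ → Ω → ℝ) (ω : Ω) :
    X (τ ω) ω = ∑ j ∈ Finset.range (m + 1), Set.indicator {ω' | τ ω' = j} (X j) ω := by
  rw [Finset.sum_eq_single (τ ω)]
  · simp [Set.indicator_of_mem, Set.mem_setOf_eq]
  · intro j _ hj
    exact Set.indicator_of_notMem (fun h => hj (by simpa using h.symm)) _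
  · intro h
    exact absurd (Finset.mem_range.2 (Nat.lt_succ_of_le (hτm ω))) h

lemma st18_stopped_integrable (hle : ∀ j, ℱ j ≤ m0) {τ : Ω → ℕ} (hτm : ∀ ω, τ ω ≤ m)
    (hτ : ∀ j, MeasurableSet[ℱ j] {ω | τ ω = j})
    {X : ℕ → Ω → ℝ} (hXint : ∀ j, Integrable (X j) μ) :
    Integrable (fun ω => X (τ ω) ω) μ := by
  have : (fun ω => X (τ ω) ω)
      = fun ω => ∑ j ∈ Finset.range (m + 1), Set.indicator {ω' | τ ω' = j} (X j) ω := by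
    funext ω; exact st18_stopped_eq_sum hτm X ω
  rw [this]
  exact integrable_finset_sum _ fun j _ => (hXint j).indicator (hle j _ (hτ j))

lemma st18_stopped_le (hle : ∀ j, ℱ j ≤ m0) {τ : Ω → ℕ} (hτm : ∀ ω, τ ω ≤ m)
    (hτ : ∀ j, MeasurableSet[ℱ j] {ω | τ ω = j})
    {X : ℕ → Ω → ℝ} (hXint : ∀ j, Integrable (X j) μ) :
    ∫ ω, X (τ ω) ω ∂μ ≤ ∑ j ∈ Finset.range (m + 1), ∫ ω, |X j ω| ∂μ := by
  have hint := st18_stopped_integrable hle hτm hτ hXint (μ := μ)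
  have h2 : Integrable (fun ω => ∑ j ∈ Finset.range (m + 1), |X j ω|) μ :=
    integrable_finset_sum _ fun j _ => (hXint j).abs
  calc ∫ ω, X (τ ω) ω ∂μ ≤ ∫ ω, ∑ j ∈ Finset.range (m + 1), |X j ω| ∂μ := by
        refine integral_mono hint h2 fun ω => ?_
        calc X (τ ω) ω ≤ |X (τ ω) ω| := le_abs_self _
        _ ≤ ∑ j ∈ Finset.range (m + 1), |X j ω| :=
            Finset.single_le_sum (fun j _ => abs_nonneg (X j ω))
              (Finset.mem_range.2 (Nat.lt_succ_of_le (hτm ω)))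
    _ = ∑ j ∈ Finset.range (m + 1), ∫ ω, |X j ω| ∂μ :=
        integral_finset_sum _ fun j _ => (hXint j).abs

lemma st18_hit (hmono : Monotone ℱ) {P : ℕ → Ω → Prop}
    (hP : ∀ k, k ≤ m → MeasurableSet[ℱ k] {ω | P k ω}) (hPm : ∀ ω, P m ω)
    (τ : Ω → ℕ) (hτdef : ∀ ω, τ ω = sInf {k | P k ω}) :
    (∀ ω, τ ω ≤ m) ∧ (∀ j, MeasurableSet[ℱ j] {ω | τ ω = j}) ∧ (∀ ω, P (τ ω) ω) := by
  have hne : ∀ ω, ({k | P k ω}).Nonempty := fun ω => ⟨m, hPm ω⟩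
  have hτm : ∀ ω, τ ω ≤ m := fun ω => (hτdef ω) ▸ Nat.sInf_le (hPm ω)
  have hmem : ∀ ω, P (τ ω) ω := fun ω => (hτdef ω) ▸ Nat.sInf_mem (hne ω)
  refine ⟨hτm, fun j => ?_, hmem⟩
  by_cases hj : j ≤ m
  · have hset : {ω | τ ω = j}
        = {ω | P j ω} ∩ ⋂ k, ⋂ (_ : k < j), {ω | P k ω}ᶜ := by
      ext ω
      simp only [Set.mem_setOf_eq, Set.mem_inter_iff, Set.mem_iInter, Set.mem_compl_iff]
      constructor
      · intro h
        refine ⟨h ▸ hmem ω, fun k hk hPk => ?_⟩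
        have := Nat.sInf_le (s := {k | P k ω}) hPk
        rw [← hτdef ω] at this
        omega
      · rintro ⟨hPj, hlt⟩
        have h1 : τ ω ≤ j := (hτdef ω) ▸ Nat.sInf_le hPj
        rcases Nat.lt_or_ge (τ ω) j with h2 | h2
        · exact absurd (hmem ω) (hlt _ h2)
        · omega
    rw [hset]
    exact (hP j hj).inter <| MeasurableSet.iInter fun k => MeasurableSet.iInter fun hk =>
      (hmono hk.le _ (hP k (by omega))).compl
  · have hset : {ω | τ ω = j} = ∅ := by
      ext ω; simp only [Set.mem_setOf_eq, Set.mem_empty_iff_false, iff_false]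
      have := hτm ω; omega
    rw [hset]; exact @MeasurableSet.empty _ (ℱ j)

lemma st18_max_ne (a b : ℝ) (h : max a b ≠ a) : max a b = b := by
  rcases le_total b a with h' | h'
  · exact absurd (max_eq_left h') h
  · exact max_eq_right h'

/-- The Snell envelope. -/
noncomputable def st18_snell (μ : Measure Ω) (ℱ : ℕ → MeasurableSpace Ω) (m : ℕ)
    (J : ℕ → Ω → ℝ) : ℕ → Ω → ℝ :=
  fun j => if h : m ≤ j then J j
    else fun ω => max (J j ω) ((μ[st18_snell μ ℱ m J (j + 1)|ℱ j]) ω)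
  termination_by j => m - j
  decreasing_by omega

lemma st18_snell_ge {J : ℕ → Ω → ℝ} {j : ℕ} (h : m ≤ j) :
    st18_snell μ ℱ m J j = J j := by
  rw [st18_snell, dif_pos h]

lemma st18_snell_lt {J : ℕ → Ω → ℝ} {j : ℕ} (h : j < m) :
    st18_snell μ ℱ m J j
      = fun ω => max (J j ω) ((μ[st18_snell μ ℱ m J (j + 1)|ℱ j]) ω) := by
  rw [st18_snell, dif_neg (by omega)]

lemma st18_snell_int {J : ℕ → Ω → ℝ} (hJint : ∀ j, Integrable (J j) μ) (j : ℕ) :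
    Integrable (st18_snell μ ℱ m J j) μ := by
  by_cases h : m ≤ j
  · rw [st18_snell_ge h]; exact hJint j
  · have ih : Integrable (st18_snell μ ℱ m J (j + 1)) μ := st18_snell_int hJint (j + 1)
    rw [st18_snell_lt (by omega)]
    have h2 : Integrable ((J j) ⊔ (μ[st18_snell μ ℱ m J (j + 1)|ℱ j])) μ :=
      (hJint j).sup integrable_condExp
    exact h2.congr (Filter.Eventually.of_forall fun ω => by
      simp [Pi.sup_apply, max_def])
  termination_by m - j
  decreasing_by omega

lemma st18_snell_meas {J : ℕ → Ω → ℝ} (hJmeas : ∀ j, j ≤ m → StronglyMeasurable[ℱ j] (J j))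
    (j : ℕ) (hj : j ≤ m) : StronglyMeasurable[ℱ j] (st18_snell μ ℱ m J j) := by
  by_cases h : m ≤ j
  · rw [st18_snell_ge h]; exact hJmeas j hj
  · rw [st18_snell_lt (by omega)]
    refine Measurable.stronglyMeasurable ?_
    exact Measurable.max (hJmeas j hj).measurable (stronglyMeasurable_condExp.measurable)

lemma st18_snell_ge_J {J : ℕ → Ω → ℝ} (j : ℕ) (ω : Ω) :
    J j ω ≤ st18_snell μ ℱ m J j ω := by
  by_cases h : m ≤ j
  · rw [st18_snell_ge h]
  · rw [st18_snell_lt (by omega)]; exact le_max_left _ _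

lemma st18_snell_cond_le {J : ℕ → Ω → ℝ} (j : ℕ) (h : j < m) (ω : Ω) :
    (μ[st18_snell μ ℱ m J (j + 1)|ℱ j]) ω ≤ st18_snell μ ℱ m J j ω := by
  rw [st18_snell_lt h]; exact le_max_right _ _

lemma st18_snell_mart {J : ℕ → Ω → ℝ} (j : ℕ) (h : j < m) (ω : Ω)
    (hne : st18_snell μ ℱ m J j ω ≠ J j ω) :
    st18_snell μ ℱ m J j ω = (μ[st18_snell μ ℱ m J (j + 1)|ℱ j]) ω := by
  rw [st18_snell_lt h] at hne ⊢
  exact st18_max_ne _ _ hne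

lemma st18_pair (hmono : Monotone ℱ) (hle : ∀ j, ℱ j ≤ m0)
    {G1 G2 S2 J : ℕ → Ω → ℝ}
    (hG2meas : ∀ j, StronglyMeasurable[ℱ j] (G2 j))
    (hS2meas : ∀ j, j ≤ m → StronglyMeasurable[ℱ j] (S2 j))
    (hG1int : ∀ j, Integrable (G1 j) μ) (hG2int : ∀ j, Integrable (G2 j) μ)
    (hS2int : ∀ j, Integrable (S2 j) μ)
    (hS2m : S2 m = G2 m)
    (hS2rec : ∀ j, j < m → S2 j = fun ω => max (G2 j ω) ((μ[S2 (j + 1)|ℱ j]) ω))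
    (hJ : ∀ j ω, J j ω = G1 j ω + S2 j ω)
    {τ1 : Ω → ℕ} (hτ1m : ∀ ω, τ1 ω ≤ m) (hτ1 : ∀ j, MeasurableSet[ℱ j] {ω | τ1 ω = j})
    {τ2 : Ω → ℕ} (hτ2def : ∀ ω, τ2 ω = sInf {k | τ1 ω ≤ k ∧ S2 k ω = G2 k ω}) :
    (∀ ω, τ1 ω ≤ τ2 ω) ∧ (∀ ω, τ2 ω ≤ m) ∧ (∀ j, MeasurableSet[ℱ j] {ω | τ2 ω = j}) ∧
      ∫ ω, J (τ1 ω) ω ∂μ = ∫ ω, (G1 (τ1 ω) ω + G2 (τ2 ω) ω) ∂μ := by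
  have hP : ∀ k, k ≤ m → MeasurableSet[ℱ k] {ω | τ1 ω ≤ k ∧ S2 k ω = G2 k ω} := by
    intro k hk
    have h1 : MeasurableSet[ℱ k] {ω | τ1 ω ≤ k} := st18_le_set hmono hτ1 k
    have hm2 : Measurable[ℱ k] fun ω => S2 k ω - G2 k ω :=
      ((hS2meas k hk).measurable.sub (hG2meas k).measurable)
    have h2 : MeasurableSet[ℱ k] {ω | S2 k ω = G2 k ω} := by
      have hset : {ω | S2 k ω = G2 k ω} = (fun ω => S2 k ω - G2 k ω) ⁻¹' {0} := by
        ext ω; simp [sub_eq_zero]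
      rw [hset]
      exact hm2 (measurableSet_singleton 0)
    have hset : {ω | τ1 ω ≤ k ∧ S2 k ω = G2 k ω}
        = {ω | τ1 ω ≤ k} ∩ {ω | S2 k ω = G2 k ω} := rfl
    rw [hset]; exact h1.inter h2
  have hPm : ∀ ω, τ1 ω ≤ m ∧ S2 m ω = G2 m ω := fun ω => ⟨hτ1m ω, by rw [hS2m]⟩
  obtain ⟨hτ2m, hτ2st, hτ2mem⟩ := st18_hit hmono hP hPm τ2 hτ2def
  have hτ12 : ∀ ω, τ1 ω ≤ τ2 ω := fun ω => (hτ2mem ω).1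
  have hmart : ∀ j, j < m → ∀ ω, τ1 ω ≤ j → j < τ2 ω → S2 j ω = (μ[S2 (j + 1)|ℱ j]) ω := by
    intro j hj ω h1 h2
    have hnot : ¬(τ1 ω ≤ j ∧ S2 j ω = G2 j ω) := by
      intro hc
      have := Nat.sInf_le (s := {k | τ1 ω ≤ k ∧ S2 k ω = G2 k ω}) hc
      rw [← hτ2def ω] at this
      omega
    have hne : S2 j ω ≠ G2 j ω := fun hc => hnot ⟨h1, hc⟩
    have hrec : S2 j ω = max (G2 j ω) ((μ[S2 (j + 1)|ℱ j]) ω) := congrFun (hS2rec j hj) ω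
    rw [hrec] at hne
    rw [hrec]
    exact st18_max_ne _ _ hne
  have iS1 : Integrable (fun ω => S2 (τ1 ω) ω) μ := st18_stopped_integrable hle hτ1m hτ1 hS2int
  have iS2 : Integrable (fun ω => S2 (τ2 ω) ω) μ := st18_stopped_integrable hle hτ2m hτ2st hS2int
  have iG1 : Integrable (fun ω => G1 (τ1 ω) ω) μ := st18_stopped_integrable hle hτ1m hτ1 hG1int
  have iG2 : Integrable (fun ω => G2 (τ2 ω) ω) μ := st18_stopped_integrable hle hτ2m hτ2st hG2int
  have heq : ∫ ω, S2 (τ1 ω) ω ∂μ = ∫ ω, S2 (τ2 ω) ω ∂μ :=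
    st18_mart hmono hle hτ12 hτ2m hτ1 hτ2st hS2int iS1 iS2 hmart
  have hG2eq : ∫ ω, S2 (τ2 ω) ω ∂μ = ∫ ω, G2 (τ2 ω) ω ∂μ :=
    integral_congr_ae (Filter.Eventually.of_forall fun ω => (hτ2mem ω).2)
  refine ⟨hτ12, hτ2m, hτ2st, ?_⟩
  have e1 : ∫ ω, J (τ1 ω) ω ∂μ = ∫ ω, (G1 (τ1 ω) ω + S2 (τ1 ω) ω) ∂μ :=
    integral_congr_ae (Filter.Eventually.of_forall fun ω => hJ _ ω)
  rw [e1, integral_add iG1 iS1, integral_add iG1 iG2, heq, hG2eq]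

end St18Aux

theorem stmt_18 {Ω : Type*} [m0 : MeasurableSpace Ω] (μ : Measure Ω) [IsProbabilityMeasure μ]
    (m : ℕ) (ℱ : ℕ → MeasurableSpace Ω) (hmono : Monotone ℱ) (hle : ∀ j, ℱ j ≤ m0)
    (G1 G2 S2 : ℕ → Ω → ℝ)
    (hG1meas : ∀ j, StronglyMeasurable[ℱ j] (G1 j))
    (hG2meas : ∀ j, StronglyMeasurable[ℱ j] (G2 j))
    (hG1int : ∀ j, Integrable (G1 j) μ) (hG2int : ∀ j, Integrable (G2 j) μ)
    (hS2int : ∀ j, Integrable (S2 j) μ)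
    (hS2m : S2 m = G2 m)
    (hS2rec : ∀ j, j < m → S2 j = fun ω => max (G2 j ω) ((μ[S2 (j + 1)|ℱ j]) ω))
    (J : ℕ → Ω → ℝ) (hJ : ∀ j ω, J j ω = G1 j ω + S2 j ω)
    (V : ℝ)
    (hV : V = sSup {x | ∃ τ1 τ2 : Ω → ℕ,
      (∀ ω, τ1 ω ≤ τ2 ω) ∧ (∀ ω, τ2 ω ≤ m) ∧
      (∀ j, MeasurableSet[ℱ j] {ω | τ1 ω = j}) ∧ (∀ j, MeasurableSet[ℱ j] {ω | τ2 ω = j}) ∧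
      x = ∫ ω, (G1 (τ1 ω) ω + G2 (τ2 ω) ω) ∂μ}) :
    V = sSup {x | ∃ τ1 : Ω → ℕ, (∀ ω, τ1 ω ≤ m) ∧
        (∀ j, MeasurableSet[ℱ j] {ω | τ1 ω = j}) ∧ x = ∫ ω, J (τ1 ω) ω ∂μ} ∧
    ∃ τ1s τ2s : Ω → ℕ,
      (∀ ω, τ1s ω ≤ τ2s ω) ∧ (∀ ω, τ2s ω ≤ m) ∧
      (∀ j, MeasurableSet[ℱ j] {ω | τ1s ω = j}) ∧
      (∀ j, MeasurableSet[ℱ j] {ω | τ2s ω = j}) ∧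
      (∀ ω, τ2s ω = sInf {k | τ1s ω ≤ k ∧ S2 k ω = G2 k ω}) ∧
      (∫ ω, J (τ1s ω) ω ∂μ = V) ∧
      (∫ ω, (G1 (τ1s ω) ω + G2 (τ2s ω) ω) ∂μ = V) := by
  classical
  -- basic facts about S2
  have hS2meas : ∀ j, j ≤ m → StronglyMeasurable[ℱ j] (S2 j) := by
    have key : ∀ k j, m - j ≤ k → j ≤ m → StronglyMeasurable[ℱ j] (S2 j) := by
      intro k
      induction k with
      | zero =>
          intro j h1 h2
          have hjm : j = m := by omega
          subst hjm
          rw [hS2m]; exact hG2meas j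
      | succ k ih =>
          intro j h1 h2
          rcases eq_or_lt_of_le h2 with heq | hlt
          · subst heq; rw [hS2m]; exact hG2meas j
          · rw [hS2rec j hlt]
            refine Measurable.stronglyMeasurable ?_
            exact Measurable.max (hG2meas j).measurable (stronglyMeasurable_condExp.measurable)
    exact fun j hj => key (m - j) j le_rfl hj
  have hG2le : ∀ j, j ≤ m → ∀ ω, G2 j ω ≤ S2 j ω := by
    intro j hj ω
    rcases eq_or_lt_of_le hj with heq | hlt
    · subst heq; rw [hS2m]
    · rw [hS2rec j hlt]; exact le_max_left _ _
  have hS2sup : ∀ j, j < m → ∀ ω, (μ[S2 (j + 1)|ℱ j]) ω ≤ S2 j ω := by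
    intro j hj ω; rw [hS2rec j hj]; exact le_max_right _ _
  have hJint : ∀ j, Integrable (J j) μ := by
    intro j
    have : J j = fun ω => G1 j ω + S2 j ω := funext (hJ j)
    rw [this]; exact (hG1int j).add (hS2int j)
  have hJmeas : ∀ j, j ≤ m → StronglyMeasurable[ℱ j] (J j) := by
    intro j hj
    have : J j = fun ω => G1 j ω + S2 j ω := funext (hJ j)
    rw [this]
    exact ((hG1meas j).measurable.add (hS2meas j hj).measurable).stronglyMeasurable
  -- the two value sets
  set B := {x | ∃ τ1 : Ω → ℕ, (∀ ω, τ1 ω ≤ m) ∧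
      (∀ j, MeasurableSet[ℱ j] {ω | τ1 ω = j}) ∧ x = ∫ ω, J (τ1 ω) ω ∂μ} with hBdef
  set A := {x | ∃ τ1 τ2 : Ω → ℕ,
      (∀ ω, τ1 ω ≤ τ2 ω) ∧ (∀ ω, τ2 ω ≤ m) ∧
      (∀ j, MeasurableSet[ℱ j] {ω | τ1 ω = j}) ∧ (∀ j, MeasurableSet[ℱ j] {ω | τ2 ω = j}) ∧
      x = ∫ ω, (G1 (τ1 ω) ω + G2 (τ2 ω) ω) ∂μ} with hAdef
  have hBmem : ∀ (τ1 : Ω → ℕ), (∀ ω, τ1 ω ≤ m) →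
      (∀ j, MeasurableSet[ℱ j] {ω | τ1 ω = j}) → (∫ ω, J (τ1 ω) ω ∂μ) ∈ B :=
    fun τ1 h1 h2 => ⟨τ1, h1, h2, rfl⟩
  have hzerost : ∀ j, MeasurableSet[ℱ j] {ω : Ω | (fun _ : Ω => 0) ω = j} := by
    intro j
    cases j with
    | zero =>
        have : {ω : Ω | (fun _ : Ω => 0) ω = 0} = Set.univ := by ext ω; simp
        rw [this]; exact MeasurableSet.univ
    | succ j =>
        have : {ω : Ω | (fun _ : Ω => 0) ω = j + 1} = ∅ := by ext ω; simp
        rw [this]; exact @MeasurableSet.empty _ (ℱ (j + 1))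
  have hBne : B.Nonempty := ⟨_, hBmem (fun _ => 0) (fun _ => Nat.zero_le m) hzerost⟩
  -- B is bounded above
  have hBbdd : BddAbove B := by
    refine ⟨∑ j ∈ Finset.range (m + 1), ∫ ω, |J j ω| ∂μ, fun x hx => ?_⟩
    obtain ⟨τ1, h1, h2, rfl⟩ := hx
    exact st18_stopped_le hle h1 h2 hJint
  -- each element of A is dominated by an element of B
  have hAleB : ∀ x ∈ A, ∃ y ∈ B, x ≤ y := by
    rintro x ⟨τ1, τ2, hστ, hτm, hσst, hτst, rfl⟩
    have hσm : ∀ ω, τ1 ω ≤ m := fun ω => (hστ ω).trans (hτm ω)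
    refine ⟨∫ ω, J (τ1 ω) ω ∂μ, hBmem τ1 hσm hσst, ?_⟩
    have iG1 : Integrable (fun ω => G1 (τ1 ω) ω) μ := st18_stopped_integrable hle hσm hσst hG1int
    have iG2 : Integrable (fun ω => G2 (τ2 ω) ω) μ := st18_stopped_integrable hle hτm hτst hG2int
    have iS1 : Integrable (fun ω => S2 (τ1 ω) ω) μ := st18_stopped_integrable hle hσm hσst hS2int
    have iS2 : Integrable (fun ω => S2 (τ2 ω) ω) μ := st18_stopped_integrable hle hτm hτst hS2int
    have e1 : ∫ ω, (G1 (τ1 ω) ω + G2 (τ2 ω) ω) ∂μ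
        = ∫ ω, G1 (τ1 ω) ω ∂μ + ∫ ω, G2 (τ2 ω) ω ∂μ := integral_add iG1 iG2
    have e2 : ∫ ω, G2 (τ2 ω) ω ∂μ ≤ ∫ ω, S2 (τ2 ω) ω ∂μ :=
      integral_mono iG2 iS2 fun ω => hG2le _ (hτm ω) ω
    have e3 : ∫ ω, S2 (τ2 ω) ω ∂μ ≤ ∫ ω, S2 (τ1 ω) ω ∂μ :=
      st18_super hmono hle hστ hτm hσst hτst hS2int iS1 iS2 hS2sup
    have e4 : ∫ ω, J (τ1 ω) ω ∂μ = ∫ ω, G1 (τ1 ω) ω ∂μ + ∫ ω, S2 (τ1 ω) ω ∂μ := by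
      rw [← integral_add iG1 iS1]
      exact integral_congr_ae (Filter.Eventually.of_forall fun ω => hJ _ ω)
    linarith
  -- B ⊆ A via the optimal second stopping time
  have hBsubA : B ⊆ A := by
    rintro x ⟨τ1, h1, h2, rfl⟩
    obtain ⟨p1, p2, p3, p4⟩ := st18_pair hmono hle hG2meas hS2meas hG1int hG2int hS2int
      hS2m hS2rec hJ h1 h2 (τ2 := fun ω => sInf {k | τ1 ω ≤ k ∧ S2 k ω = G2 k ω})
      (fun ω => rfl)
    exact ⟨τ1, _, p1, p2, h2, p3, p4⟩
  have hAne : A.Nonempty := hBne.mono hBsubA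
  have hAbdd : BddAbove A := by
    obtain ⟨c, hc⟩ := hBbdd
    refine ⟨c, fun x hx => ?_⟩
    obtain ⟨y, hy, hxy⟩ := hAleB x hx
    exact hxy.trans (hc hy)
  have hABsup : sSup A = sSup B := by
    apply le_antisymm
    · refine csSup_le hAne fun x hx => ?_
      obtain ⟨y, hy, hxy⟩ := hAleB x hx
      exact hxy.trans (le_csSup hBbdd hy)
    · exact csSup_le_csSup hAbdd hBne hBsubA
  -- Snell envelope of J and optimal first stopping time
  set U := st18_snell μ ℱ m J with hUdef
  set τ1s := fun ω => sInf {k | U k ω = J k ω} with hτ1sdef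
  have hUP : ∀ k, k ≤ m → MeasurableSet[ℱ k] {ω | U k ω = J k ω} := by
    intro k hk
    have hmU : Measurable[ℱ k] fun ω => U k ω - J k ω :=
      ((st18_snell_meas hJmeas k hk).measurable.sub (hJmeas k hk).measurable)
    have hset : {ω | U k ω = J k ω} = (fun ω => U k ω - J k ω) ⁻¹' {0} := by
      ext ω; simp [sub_eq_zero]
    rw [hset]; exact hmU (measurableSet_singleton 0)
  have hUPm : ∀ ω, U m ω = J m ω := fun ω => congrFun (st18_snell_ge le_rfl) ω
  obtain ⟨hτ1sm, hτ1sst, hτ1smem⟩ := st18_hit hmono hUP hUPm τ1s (fun ω => rfl)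
  have hUint : ∀ j, Integrable (U j) μ := st18_snell_int hJint
  have iUτ : Integrable (fun ω => U (τ1s ω) ω) μ :=
    st18_stopped_integrable hle hτ1sm hτ1sst hUint
  have iU0 : Integrable (fun ω => U ((fun _ : Ω => 0) ω) ω) μ := hUint 0
  have hmartU : ∀ j, j < m → ∀ ω, (fun _ : Ω => 0) ω ≤ j → j < τ1s ω →
      U j ω = (μ[U (j + 1)|ℱ j]) ω := by
    intro j hj ω _ h2
    have hnot : U j ω ≠ J j ω := by
      intro hc
      have h3 : τ1s ω ≤ j := Nat.sInf_le (s := {k | U k ω = J k ω}) hc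
      omega
    exact st18_snell_mart j hj ω hnot
  have hU0 : ∫ ω, U ((fun _ : Ω => 0) ω) ω ∂μ = ∫ ω, U (τ1s ω) ω ∂μ :=
    st18_mart (σ := fun _ : Ω => 0) hmono hle (fun ω => Nat.zero_le _) hτ1sm hzerost hτ1sst
      hUint iU0 iUτ hmartU
  have hUJ : ∫ ω, U (τ1s ω) ω ∂μ = ∫ ω, J (τ1s ω) ω ∂μ :=
    integral_congr_ae (Filter.Eventually.of_forall fun ω => hτ1smem ω)
  have hupper : ∀ x ∈ B, x ≤ ∫ ω, J (τ1s ω) ω ∂μ := by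
    rintro x ⟨τ1, h1, h2, rfl⟩
    have iJ : Integrable (fun ω => J (τ1 ω) ω) μ := st18_stopped_integrable hle h1 h2 hJint
    have iU : Integrable (fun ω => U (τ1 ω) ω) μ := st18_stopped_integrable hle h1 h2 hUint
    have e1 : ∫ ω, J (τ1 ω) ω ∂μ ≤ ∫ ω, U (τ1 ω) ω ∂μ :=
      integral_mono iJ iU fun ω => st18_snell_ge_J _ ω
    have e2 : ∫ ω, U (τ1 ω) ω ∂μ ≤ ∫ ω, U ((fun _ : Ω => 0) ω) ω ∂μ :=
      st18_super (σ := fun _ : Ω => 0) hmono hle (fun ω => Nat.zero_le _) h1 hzerost h2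
        hUint iU0 iU (fun j hj ω => st18_snell_cond_le j hj ω)
    linarith
  have hgreat : sSup B = ∫ ω, J (τ1s ω) ω ∂μ :=
    IsGreatest.csSup_eq ⟨hBmem τ1s hτ1sm hτ1sst, hupper⟩
  obtain ⟨q1, q2, q3, q4⟩ := st18_pair hmono hle hG2meas hS2meas hG1int hG2int hS2int
    hS2m hS2rec hJ hτ1sm hτ1sst
    (τ2 := fun ω => sInf {k | τ1s ω ≤ k ∧ S2 k ω = G2 k ω}) (fun ω => rfl)
  have hVB : V = sSup B := by rw [hV]; exact hABsup
  refine ⟨hVB, τ1s, _, q1, q2, hτ1sst, q3, fun ω => rfl, ?_, ?_⟩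
  · rw [hVB, hgreat]
  · rw [← q4, hVB, hgreat]
end
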